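/- Let a, b be integers with |a| = 1 such that all roots of X^4 + a*sqrt(5)*X^3 + b*X^2 + a*sqrt(5)*X + 1 lie on the unit circle. Then b = 3. -/

import Mathlib

/-- Auxiliary: if every root of `z² - v z + 1` has modulus 1,
then `v` is real with `|Re v| ≤ 2`. -/
lemma aux_real_bound (v : ℂ) (h : ∀ z : ℂ, z ^ 2 - v * z + 1 = 0 → ‖z‖ = 1) :
    v.im = 0 ∧ |v.re| ≤ 2 := by
  obtain ⟨t, ht⟩ : ∃ t : ℂ, t ^ 2 = v ^ 2 - 4 :=
    IsAlgClosed.exists_pow_nat_eq (v ^ 2 - 4) (n := 2) (by norm_num)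
  set z1 : ℂ := (v + t) / 2 with hz1
  set z2 : ℂ := (v - t) / 2 with hz2
  have hmul : z1 * z2 = 1 := by
    rw [hz1, hz2]; linear_combination (-1/4 : ℂ) * ht
  have hsum : z1 + z2 = v := by rw [hz1, hz2]; ring
  have h1 : ‖z1‖ = 1 := by
    apply h; rw [hz1]; linear_combination (1/4 : ℂ) * ht
  have h2 : ‖z2‖ = 1 := by
    apply h; rw [hz2]; linear_combination (1/4 : ℂ) * ht
  have hz1ne : z1 ≠ 0 := by
    intro hz; rw [hz] at h1; simp at h1
  have hconj : z2 = starRingEnd ℂ z1 := by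
    have hinv : z2 = z1⁻¹ := eq_inv_of_mul_eq_one_left (by rw [mul_comm]; exact hmul)
    rw [hinv, Complex.inv_def, Complex.normSq_eq_norm_sq, h1]
    simp
  have hv : v = 2 * z1.re := by
    rw [← hsum, hconj, Complex.add_conj]
    push_cast; ring
  constructor
  · rw [hv]; simp
  · rw [hv]
    have := Complex.abs_re_le_norm z1
    rw [h1] at this
    simp only [Complex.ofReal_mul, Complex.mul_re]
    norm_num
    exact this

theorem stmt_3 (a b : ℤ) (ha : |a| = 1)
    (hroots : ∀ z : ℂ,
      z ^ 4 + (a : ℂ) * (Real.sqrt 5 : ℂ) * z ^ 3 + (b : ℂ) * z ^ 2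
        + (a : ℂ) * (Real.sqrt 5 : ℂ) * z + 1 = 0 → ‖z‖ = 1) :
    b = 3 := by
  have ha' : a = 1 ∨ a = -1 := (abs_eq (by norm_num)).mp ha
  have ha2 : (a : ℂ) ^ 2 = 1 := by rcases ha' with h | h <;> simp [h]
  have hs5 : ((Real.sqrt 5 : ℝ) : ℂ) ^ 2 = 5 := by
    norm_cast
    rw [Real.sq_sqrt] ; norm_num
  obtain ⟨u, hu⟩ : ∃ u : ℂ, u ^ 2 = 13 - 4 * b :=
    IsAlgClosed.exists_pow_nat_eq ((13 : ℂ) - 4 * b) (n := 2) (by norm_num)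
  set s5 : ℂ := ((Real.sqrt 5 : ℝ) : ℂ) with hs5def
  set w : ℂ := (-(a : ℂ) * s5 + u) / 2 with hw
  set w' : ℂ := (-(a : ℂ) * s5 - u) / 2 with hw'
  have key : ∀ z : ℂ, z ^ 4 + (a : ℂ) * s5 * z ^ 3 + (b : ℂ) * z ^ 2
      + (a : ℂ) * s5 * z + 1 = (z ^ 2 - w * z + 1) * (z ^ 2 - w' * z + 1) := by
    intro z
    rw [hw, hw']
    field_simp
    ring_nf
    linear_combination (z ^ 2 : ℂ) * hu - (5 * z ^ 2 : ℂ) * ha2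
      - (z ^ 2 * (a : ℂ) ^ 2 : ℂ) * hs5
  have hwfacts := aux_real_bound w (fun z hz => hroots z (by rw [key z, hz, zero_mul]))
  have hw'facts := aux_real_bound w' (fun z hz => hroots z (by rw [key z, hz, mul_zero]))
  obtain ⟨hwim, hwre⟩ := hwfacts
  obtain ⟨hw'im, hw're⟩ := hw'facts
  -- u = w - w' is real, so 13 - 4b ≥ 0, hence b ≤ 3
  have huwm : u = w - w' := by rw [hw, hw']; ring
  have huim : u.im = 0 := by rw [huwm]; simp [Complex.sub_im, hwim, hw'im]
  have hure : (u.re : ℝ) ^ 2 = 13 - 4 * b := by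
    have : (u ^ 2).re = ((13 : ℂ) - 4 * b).re := by rw [hu]
    simpa [Complex.sq_norm, pow_two, Complex.mul_re, huim] using this
  have hble : (b : ℝ) ≤ 13 / 4 := by nlinarith [sq_nonneg u.re]
  -- sum and product of real parts
  have hsumc : w + w' = -(a : ℂ) * s5 := by rw [hw, hw']; ring
  have hprodc : w * w' = (b : ℂ) - 2 := by
    rw [hw, hw']
    field_simp
    linear_combination (5 : ℂ) * ha2 - hu + ((a:ℂ)^2) * hs5
  have hsumr : w.re + w'.re = -(a : ℝ) * Real.sqrt 5 := by
    have : (w + w').re = (-(a : ℂ) * s5).re := by rw [hsumc]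
    simpa [hs5def, Complex.add_re, Complex.mul_re, Complex.neg_re] using this
  have hprodr : w.re * w'.re = (b : ℝ) - 2 := by
    have : (w * w').re = ((b : ℂ) - 2).re := by rw [hprodc]
    simpa [Complex.mul_re, hwim, hw'im] using this
  have hsq5 : Real.sqrt 5 ^ 2 = 5 := Real.sq_sqrt (by norm_num)
  have hsq5pos : (2 : ℝ) < Real.sqrt 5 := by nlinarith [Real.sqrt_nonneg 5]
  -- (2 + a w.re)(2 + a w'.re) ≥ 0 gives b ≥ 2√5 - 2 > 2
  have hgt : (2 : ℝ) < (b : ℝ) := by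
    rcases ha' with h | h <;>
    · subst h
      push_cast at hsumr ⊢
      rcases abs_le.mp hwre with ⟨h1, h2⟩
      rcases abs_le.mp hw're with ⟨h3, h4⟩
      nlinarith [mul_nonneg (by linarith : (0:ℝ) ≤ 2 + w.re) (by linarith : (0:ℝ) ≤ 2 + w'.re),
        mul_nonneg (by linarith : (0:ℝ) ≤ 2 - w.re) (by linarith : (0:ℝ) ≤ 2 - w'.re)]
  have : (2 : ℤ) < b ∧ (b : ℝ) ≤ 13 / 4 := ⟨by exact_mod_cast hgt, hble⟩
  have hb3 : b ≤ 3 := by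
    by_contra hc
    push_neg at hc
    have : (4 : ℝ) ≤ (b : ℝ) := by exact_mod_cast hc
    linarith
  omega
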